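/- Let s>0, N≥1 and ξ∈ℕ_0^N with m=Σ_{i=1}^N ξ_i. Let x_1≤x_2≤…≤x_m be the nondecreasing list of positions associated with ξ (i.e. the site i appears exactly ξ_i times among the x_k). Then for every 0≤n≤m, the occupation-number expression Σ_{(n_1,…,n_N)∈ℕ_0^N, n_1+…+n_N=n} Π_{i=1}^N binom(ξ_i, n_i) Π_{j=1}^{n_i} (2s(N+1-i)-j+Σ_{k=i}^N n_k)/(2s(N+1)-j+Σ_{k=i}^N n_k) equals the position expression Σ_{1≤i_1<…<i_n≤m} Π_{α=1}^n (n-α+2s(N+1-x_{i_α}))/(n-α+2s(N+1)). -/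

import Mathlib

open scoped Classical

noncomputable section

namespace HeatModel


/-- The coefficient `g_ξ(n)` in occupation-number form (formula (2.17) of the paper);
`xi i` is the number of dual particles at the (1-indexed) site `i+1`. -/
def gOcc (s : ℝ) (N : ℕ) (xi : Fin N → ℕ) (n : ℕ) : ℝ :=
  ∑ m ∈ Finset.Nat.antidiagonalTuple N n,
    ∏ i : Fin N,
      (Nat.choose (xi i) (m i) : ℝ) *
        ∏ j ∈ Finset.Icc 1 (m i),
          (2 * s * ((N : ℝ) - (i : ℕ)) - (j : ℝ) +
              (∑ k ∈ Finset.univ.filter (fun k : Fin N => i ≤ k), (m k : ℝ))) /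
            (2 * s * ((N : ℝ) + 1) - (j : ℝ) +
              (∑ k ∈ Finset.univ.filter (fun k : Fin N => i ≤ k), (m k : ℝ)))

/-- The coefficient `g_x(n)` in position form (formula (2.19) of the paper), for dual
particles at the nondecreasing (1-indexed) positions `x 0 ≤ x 1 ≤ … ≤ x (m-1)`. -/
def gPos (s : ℝ) (N : ℕ) (m : ℕ) (x : Fin m → ℕ) (n : ℕ) : ℝ :=
  ∑ ι ∈ Finset.univ.filter (fun ι : Fin n → Fin m => StrictMono ι),
    ∏ α : Fin n,
      ((n : ℝ) - ((α : ℕ) + 1) + 2 * s * ((N : ℝ) + 1 - (x (ι α) : ℝ))) /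
        ((n : ℝ) - ((α : ℕ) + 1) + 2 * s * ((N : ℝ) + 1))

open Finset

/-- the rank of `orderEmbOfFin S h α` inside `S` is `α`. -/
lemma rank_orderEmbOfFin {γ : Type*} [LinearOrder γ] {n : ℕ} (S : Finset γ) (h : S.card = n)
    (α : Fin n) :
    (S.filter (fun k => k < S.orderEmbOfFin h α)).card = α := by
  have hr : S.filter (fun k => k < S.orderEmbOfFin h α)
      = (Finset.Iio α).image (S.orderEmbOfFin h) := by
    ext k
    simp only [mem_filter, mem_image, mem_Iio]
    constructor
    · rintro ⟨hkS, hk⟩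
      have hrange : k ∈ Set.range (S.orderEmbOfFin h) := by
        rw [Finset.range_orderEmbOfFin]; exact hkS
      obtain ⟨β, rfl⟩ := hrange
      exact ⟨β, (S.orderEmbOfFin h).strictMono.lt_iff_lt.mp hk, rfl⟩
    · rintro ⟨β, hβ, rfl⟩
      exact ⟨Finset.orderEmbOfFin_mem S h β, (S.orderEmbOfFin h).strictMono hβ⟩
  rw [hr, Finset.card_image_of_injective _ (S.orderEmbOfFin h).injective, Fin.card_Iio]

/-- reindex a product over `Fin n` along `orderEmbOfFin` as a product over the set,
with the index replaced by the rank. -/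
lemma prod_orderEmbOfFin_eq {γ : Type*} [LinearOrder γ] {n : ℕ} (S : Finset γ)
    (h : S.card = n) (H : ℕ → γ → ℝ) :
    ∏ α : Fin n, H α (S.orderEmbOfFin h α)
      = ∏ k ∈ S, H ((S.filter (fun k' => k' < k)).card) k := by
  refine Finset.prod_nbij (fun α => S.orderEmbOfFin h α)
    (fun α _ => Finset.orderEmbOfFin_mem S h α)
    (fun a _ b _ hab => (S.orderEmbOfFin h).injective hab) ?_ ?_
  · intro k hk
    have hrange : k ∈ Set.range (S.orderEmbOfFin h) := by
      rw [Finset.range_orderEmbOfFin]; exact hk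
    obtain ⟨α, rfl⟩ := hrange
    exact ⟨α, by simp, rfl⟩
  · intro α _
    rw [rank_orderEmbOfFin S h α]

lemma rank_split {m N : ℕ} {p : Fin m → Fin N} (hp : Monotone p) (S : Finset (Fin m))
    (k : Fin m) :
    (S.filter (fun k' => k' < k)).card
      = (S.filter (fun k' => p k' < p k)).card
        + ((S.filter (fun k' => p k' = p k)).filter (fun k' => k' < k)).card := by
  rw [← Finset.card_union_of_disjoint]
  · congr 1
    ext k'
    simp only [mem_union, mem_filter]
    constructor
    · rintro ⟨hS, hlt⟩
      rcases lt_or_eq_of_le (hp hlt.le) with h' | h'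
      · exact Or.inl ⟨hS, h'⟩
      · exact Or.inr ⟨⟨hS, h'⟩, hlt⟩
    · rintro (⟨hS, hlt⟩ | ⟨⟨hS, _⟩, hlt⟩)
      · refine ⟨hS, ?_⟩
        by_contra hle
        exact absurd (hp (not_lt.mp hle)) (not_le.mpr hlt)
      · exact ⟨hS, hlt⟩
  · rw [Finset.disjoint_left]
    intro a ha hb
    simp only [mem_filter] at ha hb
    exact absurd hb.1.2 (ne_of_lt ha.2)

lemma card_filter_lt {m N : ℕ} (p : Fin m → Fin N) (S : Finset (Fin m)) (i : Fin N) :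
    (S.filter (fun k => p k < i)).card
      = ∑ j ∈ Finset.univ.filter (fun j : Fin N => j < i),
          (S.filter (fun k => p k = j)).card := by
  rw [Finset.card_eq_sum_card_fiberwise
      (f := p) (t := Finset.univ.filter (fun j : Fin N => j < i))
      (fun k hk => by simpa using (Finset.mem_filter.mp hk).2)]
  refine Finset.sum_congr rfl (fun j hj => ?_)
  simp only [mem_filter, mem_univ, true_and] at hj
  congr 1
  ext k
  simp only [Finset.filter_filter, mem_filter]
  constructor
  · rintro ⟨hS, _, h2⟩; exact ⟨hS, h2⟩
  · rintro ⟨hS, h2⟩; exact ⟨hS, h2 ▸ hj, h2⟩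

def innerProd (s : ℝ) (N : ℕ) (c : Fin N → ℕ) : ℝ :=
  ∏ i : Fin N, ∏ j ∈ Finset.Icc 1 (c i),
    (2 * s * ((N : ℝ) - (i : ℕ)) - (j : ℝ) +
        (∑ k ∈ Finset.univ.filter (fun k : Fin N => i ≤ k), (c k : ℝ))) /
      (2 * s * ((N : ℝ) + 1) - (j : ℝ) +
        (∑ k ∈ Finset.univ.filter (fun k : Fin N => i ≤ k), (c k : ℝ)))

lemma key {N n m : ℕ} (s : ℝ) (p : Fin m → Fin N) (hp : Monotone p)
    (S : Finset (Fin m)) (hS : S.card = n) :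
    (∏ α : Fin n,
        ((n : ℝ) - ((α : ℕ) + 1) + 2 * s * ((N : ℝ) - ((p (S.orderEmbOfFin hS α) : ℕ) : ℝ))) /
          ((n : ℝ) - ((α : ℕ) + 1) + 2 * s * ((N : ℝ) + 1)))
    = innerProd s N (fun i => (S.filter (fun k => p k = i)).card) := by
  set c : Fin N → ℕ := fun i => (S.filter (fun k => p k = i)).card with hc
  -- the total count
  have hcn : ∑ i : Fin N, c i = n := by
    rw [hc, ← Finset.card_eq_sum_card_fiberwise (fun k _ => Finset.mem_univ (p k)), hS]
  -- real-number identity: n - (number of earlier particles) = tail sum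
  have htail : ∀ i : Fin N,
      (n : ℝ) - ((S.filter (fun k => p k < i)).card : ℝ)
        = ∑ k ∈ Finset.univ.filter (fun k : Fin N => i ≤ k), (c k : ℝ) := by
    intro i
    have hsplit := Finset.sum_filter_add_sum_filter_not (Finset.univ : Finset (Fin N))
      (fun j => j < i) (fun j => (c j : ℝ))
    have h1 : ((S.filter (fun k => p k < i)).card : ℝ)
        = ∑ j ∈ Finset.univ.filter (fun j : Fin N => j < i), (c j : ℝ) := by
      rw [card_filter_lt p S i]; push_cast; rfl
    have h2 : Finset.univ.filter (fun j : Fin N => ¬ j < i)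
        = Finset.univ.filter (fun j : Fin N => i ≤ j) := by
      simp [not_lt]
    have h3 : ∑ j : Fin N, (c j : ℝ) = (n : ℝ) := by
      rw [← hcn]; push_cast; rfl
    rw [h1]
    rw [h2] at hsplit
    linarith [hsplit, h3]
  -- step 1: product over Fin n → product over S of ranks
  rw [prod_orderEmbOfFin_eq S hS
    (fun a k => ((n : ℝ) - ((a : ℕ) + 1) + 2 * s * ((N : ℝ) - ((p k : ℕ) : ℝ))) /
      ((n : ℝ) - ((a : ℕ) + 1) + 2 * s * ((N : ℝ) + 1)))]
  -- step 2: fiberwise over p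
  rw [← Finset.prod_fiberwise S p]
  unfold innerProd
  refine Finset.prod_congr rfl (fun i _ => ?_)
  -- step 3: within fiber i
  have hinner : ∀ k ∈ S.filter (fun k => p k = i),
      (((n : ℝ) - (((S.filter (fun k' => k' < k)).card : ℕ) + 1)
          + 2 * s * ((N : ℝ) - ((p k : ℕ) : ℝ))) /
        ((n : ℝ) - (((S.filter (fun k' => k' < k)).card : ℕ) + 1) + 2 * s * ((N : ℝ) + 1)))
      = (fun (t : ℕ) (_ : Fin m) =>
          (((n : ℝ) - (((S.filter (fun k' => p k' < i)).card + t : ℕ) + 1)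
              + 2 * s * ((N : ℝ) - ((i : ℕ) : ℝ))) /
            ((n : ℝ) - (((S.filter (fun k' => p k' < i)).card + t : ℕ) + 1)
              + 2 * s * ((N : ℝ) + 1))))
          (((S.filter (fun k => p k = i)).filter (fun k' => k' < k)).card) k := by
    intro k hk
    obtain ⟨hkS, hpk⟩ := Finset.mem_filter.mp hk
    have hr := rank_split hp S k
    rw [hpk] at hr
    simp only [hr, hpk]
  rw [Finset.prod_congr rfl hinner]
  rw [← prod_orderEmbOfFin_eq (S.filter (fun k => p k = i)) rfl
    (fun (t : ℕ) (_ : Fin m) =>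
      (((n : ℝ) - (((S.filter (fun k' => p k' < i)).card + t : ℕ) + 1)
          + 2 * s * ((N : ℝ) - ((i : ℕ) : ℝ))) /
        ((n : ℝ) - (((S.filter (fun k' => p k' < i)).card + t : ℕ) + 1)
          + 2 * s * ((N : ℝ) + 1))))]
  rw [Fin.prod_univ_eq_prod_range
    (fun t => (((n : ℝ) - (((S.filter (fun k' => p k' < i)).card + t : ℕ) + 1)
        + 2 * s * ((N : ℝ) - ((i : ℕ) : ℝ))) /
      ((n : ℝ) - (((S.filter (fun k' => p k' < i)).card + t : ℕ) + 1)
        + 2 * s * ((N : ℝ) + 1))))]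
  -- now reindex Icc 1 (c i) ↔ range (c i)
  have hIcc : Finset.Icc 1 (c i) = Finset.Ico 1 (c i + 1) := by
    rw [Finset.Ico_add_one_right_eq_Icc]
  rw [hIcc, Finset.prod_Ico_eq_prod_range]
  simp only [Nat.add_sub_cancel]
  refine Finset.prod_congr rfl (fun t _ => ?_)
  have e1 : (n : ℝ) - (((S.filter (fun k' => p k' < i)).card + t : ℕ) + 1)
      = (∑ k ∈ Finset.univ.filter (fun k : Fin N => i ≤ k), (c k : ℝ)) - ((1 + t : ℕ) : ℝ) := by
    rw [← htail i]; push_cast; ring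
  rw [e1]
  push_cast
  ring_nf

lemma card_fiber {m N n : ℕ} (p : Fin m → Fin N) (xi : Fin N → ℕ)
    (hcard : ∀ i, (Finset.univ.filter (fun k => p k = i)).card = xi i)
    (c : Fin N → ℕ) (hc : ∑ i, c i = n) :
    ((Finset.powersetCard n (Finset.univ : Finset (Fin m))).filter
        (fun S => ∀ i, (S.filter (fun k => p k = i)).card = c i)).card
      = ∏ i : Fin N, (xi i).choose (c i) := by
  have hpi : ((Finset.univ : Finset (Fin N)).pi
      (fun i => Finset.powersetCard (c i) (Finset.univ.filter (fun k : Fin m => p k = i)))).card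
      = ∏ i : Fin N, (xi i).choose (c i) := by
    rw [Finset.card_pi]
    refine Finset.prod_congr rfl (fun i _ => ?_)
    rw [Finset.card_powersetCard, hcard]
  rw [← hpi]
  refine Finset.card_bij' (fun S _ => fun i _ => S.filter (fun k => p k = i))
    (fun g hg => Finset.univ.biUnion (fun i => g i (Finset.mem_univ i))) ?_ ?_ ?_ ?_
  · -- forward membership
    intro S hS
    simp only [Finset.mem_filter] at hS
    rw [Finset.mem_pi]
    intro i _
    rw [Finset.mem_powersetCard]
    exact ⟨Finset.filter_subset_filter _ (Finset.subset_univ S), hS.2 i⟩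
  · -- backward membership
    intro g hg
    rw [Finset.mem_pi] at hg
    have hsub : ∀ i, g i (Finset.mem_univ i) ⊆ Finset.univ.filter (fun k : Fin m => p k = i) :=
      fun i => (Finset.mem_powersetCard.mp (hg i (Finset.mem_univ i))).1
    have hgc : ∀ i, (g i (Finset.mem_univ i)).card = c i :=
      fun i => (Finset.mem_powersetCard.mp (hg i (Finset.mem_univ i))).2
    have hfib : ∀ i, ((Finset.univ.biUnion (fun i => g i (Finset.mem_univ i))).filter
        (fun k => p k = i)) = g i (Finset.mem_univ i) := by
      intro i
      ext k
      simp only [Finset.mem_filter, Finset.mem_biUnion, Finset.mem_univ, true_and]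
      constructor
      · rintro ⟨⟨j, hj⟩, hpk⟩
        have hpj : p k = j := by simpa using (Finset.mem_filter.mp (hsub j hj)).2
        have hji : j = i := by rw [← hpj, hpk]
        subst hji
        exact hj
      · intro hk
        have : p k = i := by simpa using (Finset.mem_filter.mp (hsub i hk)).2
        exact ⟨⟨i, hk⟩, this⟩
    simp only [Finset.mem_filter]
    constructor
    · rw [Finset.mem_powersetCard]
      refine ⟨Finset.subset_univ _, ?_⟩
      rw [Finset.card_eq_sum_card_fiberwise
        (f := p) (t := Finset.univ) (fun k _ => Finset.mem_univ (p k))]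
      rw [← hc]
      exact Finset.sum_congr rfl (fun i _ => by rw [hfib i, hgc i])
    · intro i
      rw [hfib i, hgc i]
  · -- left inverse
    intro S hS
    ext k
    simp only [Finset.mem_biUnion, Finset.mem_univ, true_and, Finset.mem_filter]
    exact ⟨fun ⟨i, hk, _⟩ => hk, fun hk => ⟨p k, hk, rfl⟩⟩
  · -- right inverse
    intro g hg
    rw [Finset.mem_pi] at hg
    have hsub : ∀ i, g i (Finset.mem_univ i) ⊆ Finset.univ.filter (fun k : Fin m => p k = i) :=
      fun i => (Finset.mem_powersetCard.mp (hg i (Finset.mem_univ i))).1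
    funext i hi
    ext k
    simp only [Finset.mem_filter, Finset.mem_biUnion, Finset.mem_univ, true_and]
    constructor
    · rintro ⟨⟨j, hj⟩, hpk⟩
      have hpj : p k = j := by simpa using (Finset.mem_filter.mp (hsub j hj)).2
      have hji : j = i := by rw [← hpj, hpk]
      subst hji
      exact hj
    · intro hk
      have : p k = i := by simpa using (Finset.mem_filter.mp (hsub i hk)).2
      exact ⟨⟨i, hk⟩, this⟩


/-- Equivalence of the occupation-number formula (2.17) and the position formula (2.19)
for the coefficients of the non-equilibrium multivariate moments. -/

theorem gOcc_eq_gPos (N : ℕ) (hN : 1 ≤ N) (s : ℝ) (hs : 0 < s) (xi : Fin N → ℕ)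
    (m : ℕ) (hm : m = ∑ i : Fin N, xi i) (x : Fin m → ℕ) (hmono : Monotone x)
    (hcount : ∀ i : Fin N, (Finset.univ.filter fun k : Fin m => x k = (i : ℕ) + 1).card = xi i)
    (n : ℕ) (hn : n ≤ m) :
    gOcc s N xi n = gPos s N m x n := by
  classical
  -- the positions all lie in {1, …, N}
  have hx : ∀ k : Fin m, 1 ≤ x k ∧ x k ≤ N := by
    have hU : Finset.univ.biUnion
        (fun i : Fin N => Finset.univ.filter (fun k : Fin m => x k = (i : ℕ) + 1))
        = (Finset.univ : Finset (Fin m)) := by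
      apply Finset.eq_univ_of_card
      rw [Finset.card_biUnion]
      · rw [Fintype.card_fin]
        simp only [hcount]
        exact hm.symm
      · intro a _ b _ hab
        rw [Function.onFun, Finset.disjoint_left]
        intro k hk hk'
        simp only [Finset.mem_filter] at hk hk'
        exact hab (Fin.ext (by omega))
    intro k
    have hk : k ∈ Finset.univ.biUnion
        (fun i : Fin N => Finset.univ.filter (fun k : Fin m => x k = (i : ℕ) + 1)) := by
      rw [hU]; exact Finset.mem_univ k
    obtain ⟨i, _, hi⟩ := Finset.mem_biUnion.mp hk
    simp only [Finset.mem_filter, Finset.mem_univ, true_and] at hi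
    have := i.isLt
    omega
  -- the 0-indexed site map
  set p : Fin m → Fin N := fun k =>
    (⟨x k - 1, by have h1 := (hx k).1; have h2 := (hx k).2; omega⟩ : Fin N) with hp_def
  have hpx : ∀ k, x k = (p k : ℕ) + 1 := by
    intro k
    have h1 := (hx k).1
    show x k = x k - 1 + 1
    omega
  have hp_mono : Monotone p := by
    intro a b hab
    have := hmono hab
    simp only [hp_def, Fin.mk_le_mk]
    omega
  have hpcount : ∀ i : Fin N, (Finset.univ.filter (fun k => p k = i)).card = xi i := by
    intro i
    rw [← hcount i]
    congr 1
    ext k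
    simp only [Finset.mem_filter, Finset.mem_univ, true_and, Fin.ext_iff]
    have h1 := (hx k).1
    show x k - 1 = (i : ℕ) ↔ x k = (i : ℕ) + 1
    omega
  -- step 2 : the position formula as a sum over subsets
  have step2 : gPos s N m x n
      = ∑ S ∈ Finset.powersetCard n (Finset.univ : Finset (Fin m)),
          innerProd s N (fun i => (S.filter (fun k => p k = i)).card) := by
    rw [gPos]
    refine Finset.sum_nbij (fun ι => Finset.image ι Finset.univ) ?_ ?_ ?_ ?_
    · intro ι hι
      simp only [Finset.mem_filter, Finset.mem_univ, true_and] at hι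
      rw [Finset.mem_powersetCard]
      refine ⟨Finset.subset_univ _, ?_⟩
      rw [Finset.card_image_of_injective _ hι.injective, Finset.card_univ, Fintype.card_fin]
    · intro a ha b hb hab
      simp only [Finset.coe_filter, Set.mem_setOf_eq, Finset.mem_univ, true_and] at ha hb
      have hab' : Finset.image a Finset.univ = Finset.image b Finset.univ := hab
      have hcarda : (Finset.image a Finset.univ).card = n := by
        rw [Finset.card_image_of_injective _ ha.injective, Finset.card_univ, Fintype.card_fin]
      have hae := Finset.orderEmbOfFin_unique hcarda
        (fun α => Finset.mem_image_of_mem a (Finset.mem_univ α)) ha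
      have hbe := Finset.orderEmbOfFin_unique hcarda
        (f := b) (fun α => by rw [hab']; exact Finset.mem_image_of_mem b (Finset.mem_univ α)) hb
      exact hae.trans hbe.symm
    · intro S hS
      have hS' : S ∈ Finset.powersetCard n (Finset.univ : Finset (Fin m)) :=
        Finset.mem_coe.mp hS
      have hcard : S.card = n := (Finset.mem_powersetCard.mp hS').2
      refine ⟨S.orderEmbOfFin hcard, ?_, ?_⟩
      · simp only [Finset.coe_filter, Set.mem_setOf_eq, Finset.mem_univ, true_and]
        exact (S.orderEmbOfFin hcard).strictMono
      · ext k
        simp only [Finset.mem_image, Finset.mem_univ, true_and, Finset.mem_coe]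
        constructor
        · rintro ⟨α, rfl⟩
          exact Finset.orderEmbOfFin_mem S hcard α
        · intro hk
          have hrange : k ∈ Set.range (S.orderEmbOfFin hcard) := by
            rw [Finset.range_orderEmbOfFin]; exact hk
          obtain ⟨α, rfl⟩ := hrange
          exact ⟨α, rfl⟩
    · intro ι hι
      simp only [Finset.mem_filter, Finset.mem_univ, true_and] at hι
      have hcard : (Finset.image ι Finset.univ).card = n := by
        rw [Finset.card_image_of_injective _ hι.injective, Finset.card_univ, Fintype.card_fin]
      have hιe := Finset.orderEmbOfFin_unique hcard
        (fun α => Finset.mem_image_of_mem ι (Finset.mem_univ α)) hι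
      rw [← key s p hp_mono (Finset.image ι Finset.univ) hcard]
      refine Finset.prod_congr rfl (fun α _ => ?_)
      rw [← hιe]
      have : ((x (ι α) : ℕ) : ℝ) = ((p (ι α) : ℕ) : ℝ) + 1 := by
        rw [hpx (ι α)]; push_cast; ring
      rw [this]
      ring_nf
  -- step 3 : group the subsets according to their occupation numbers
  have hmaps : ∀ S ∈ Finset.powersetCard n (Finset.univ : Finset (Fin m)),
      (fun i => (S.filter (fun k => p k = i)).card) ∈ Finset.Nat.antidiagonalTuple N n := by
    intro S hS
    rw [Finset.Nat.mem_antidiagonalTuple]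
    rw [← Finset.card_eq_sum_card_fiberwise (f := p) (t := Finset.univ)
      (fun k _ => Finset.mem_univ (p k))]
    exact (Finset.mem_powersetCard.mp hS).2
  have step3 : ∑ S ∈ Finset.powersetCard n (Finset.univ : Finset (Fin m)),
      innerProd s N (fun i => (S.filter (fun k => p k = i)).card)
      = ∑ c ∈ Finset.Nat.antidiagonalTuple N n,
          (∏ i : Fin N, ((xi i).choose (c i) : ℝ)) * innerProd s N c := by
    rw [← Finset.sum_fiberwise_of_maps_to hmaps
      (fun S => innerProd s N (fun i => (S.filter (fun k => p k = i)).card))]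
    refine Finset.sum_congr rfl (fun c hc => ?_)
    have hterm : ∀ S ∈ (Finset.powersetCard n (Finset.univ : Finset (Fin m))).filter
        (fun S => (fun i => (S.filter (fun k => p k = i)).card) = c),
        innerProd s N (fun i => (S.filter (fun k => p k = i)).card) = innerProd s N c := by
      intro S hS
      rw [(Finset.mem_filter.mp hS).2]
    rw [Finset.sum_congr rfl hterm, Finset.sum_const, nsmul_eq_mul]
    congr 1
    have hfe : (Finset.powersetCard n (Finset.univ : Finset (Fin m))).filter
        (fun S => (fun i => (S.filter (fun k => p k = i)).card) = c)
        = (Finset.powersetCard n (Finset.univ : Finset (Fin m))).filter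
        (fun S => ∀ i, (S.filter (fun k => p k = i)).card = c i) := by
      apply Finset.filter_congr
      intro S _
      simp [funext_iff]
    rw [hfe, card_fiber p xi hpcount c (Finset.Nat.mem_antidiagonalTuple.mp hc)]
    push_cast
    rfl
  -- step 4 : the occupation formula
  have step4 : gOcc s N xi n
      = ∑ c ∈ Finset.Nat.antidiagonalTuple N n,
          (∏ i : Fin N, ((xi i).choose (c i) : ℝ)) * innerProd s N c := by
    rw [gOcc]
    refine Finset.sum_congr rfl (fun c _ => ?_)
    rw [Finset.prod_mul_distrib]
    rfl
  rw [step4, step2, step3]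

end HeatModel
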